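/- Let ε, α, β, ω ∈ ℝ and let x, y : ℝ → ℝ be twice differentiable functions satisfying ẍ(t) + ε(αx(t)² + βy(t)² − 1)ẋ(t) + ω²x(t) = 0 and ÿ(t) − ε(αx(t)² + βy(t)² − 1)ẏ(t) + ω²y(t) = 0 for all t ∈ ℝ. Then the function t ↦ ẋ(t)·ẏ(t) + ω²·x(t)·y(t) is constant on ℝ. -/

import Mathlib

theorem symmetric_vdp_first_integral
    (ε α β ω : ℝ) (x y : ℝ → ℝ)
    (hx : Differentiable ℝ x) (hx' : Differentiable ℝ (deriv x))
    (hy : Differentiable ℝ y) (hy' : Differentiable ℝ (deriv y))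
    (hxeq : ∀ t : ℝ, deriv (deriv x) t
      + ε * (α * (x t) ^ 2 + β * (y t) ^ 2 - 1) * deriv x t + ω ^ 2 * x t = 0)
    (hyeq : ∀ t : ℝ, deriv (deriv y) t
      - ε * (α * (x t) ^ 2 + β * (y t) ^ 2 - 1) * deriv y t + ω ^ 2 * y t = 0) :
    ∃ c : ℝ, ∀ t : ℝ, deriv x t * deriv y t + ω ^ 2 * x t * y t = c := by
  set F : ℝ → ℝ := fun t => deriv x t * deriv y t + ω ^ 2 * x t * y t with hF
  have hdiff : Differentiable ℝ F := by
    apply Differentiable.add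
    · exact hx'.mul hy'
    · exact ((hx.const_mul _).mul hy)
  have hderiv : ∀ t, deriv F t = 0 := by
    intro t
    have h1 : HasDerivAt F (deriv (deriv x) t * deriv y t + deriv x t * deriv (deriv y) t
        + ω ^ 2 * (deriv x t * y t + x t * deriv y t)) t := by
      have hx2 := (hx'.differentiableAt (x := t)).hasDerivAt
      have hy2 := (hy'.differentiableAt (x := t)).hasDerivAt
      have hx1 := (hx.differentiableAt (x := t)).hasDerivAt
      have hy1 := (hy.differentiableAt (x := t)).hasDerivAt
      have := (hx2.mul hy2).add (((hx1.mul hy1)).const_mul (ω ^ 2))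
      have hfun : F = (deriv x * deriv y + fun y_1 => ω ^ 2 * (x * y) y_1) := by
        funext s; simp only [hF, Pi.add_apply, Pi.mul_apply]; ring
      rw [hfun]; exact this
    rw [h1.deriv]
    have ex := hxeq t
    have ey := hyeq t
    have hxx : deriv (deriv x) t = -(ε * (α * (x t) ^ 2 + β * (y t) ^ 2 - 1) * deriv x t) - ω ^ 2 * x t := by linarith
    have hyy : deriv (deriv y) t = ε * (α * (x t) ^ 2 + β * (y t) ^ 2 - 1) * deriv y t - ω ^ 2 * y t := by linarith
    rw [hxx, hyy]; ring
  refine ⟨F 0, fun t => ?_⟩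
  have := is_const_of_deriv_eq_zero hdiff hderiv t 0
  simpa [hF] using this
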